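/- For every even n = 2m with m ≥ 1, there exists ε > 0 such that for all q ∈ (1−ε, 1) one has t_n · (∑_{i=0}^{n} t_i q^i) > 0. (Consequently, in this range of q the greedy rule forces the player to switch after an even-indexed round when the sequence so far is Thue-Morse.) -/
import Mathlib


/-- The Thue-Morse sequence on the alphabet `{-1, 1}`:
`t 0 = -1`, `t (2i) = t i`, `t (2i+1) = -t (2i)`. -/
def thueMorse : ℕ → ℤ
  | 0 => -1
  | n + 1 =>
    have : (n + 1) / 2 < n + 1 := Nat.div_lt_self (Nat.succ_pos n) one_lt_two
    if (n + 1) % 2 = 0 then thueMorse ((n + 1) / 2) else -thueMorse ((n + 1) / 2)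

lemma tm_two_mul (j : ℕ) : thueMorse (2 * j) = thueMorse j := by
  cases j with
  | zero => rfl
  | succ k =>
      have h : 2 * (k + 1) = (2 * k + 1) + 1 := by ring
      rw [h, thueMorse]
      have h2 : (2 * k + 1 + 1) % 2 = 0 := by omega
      have h3 : (2 * k + 1 + 1) / 2 = k + 1 := by omega
      simp [h2, h3]

lemma tm_two_mul_add_one (j : ℕ) : thueMorse (2 * j + 1) = -thueMorse j := by
  rw [thueMorse]
  have h2 : (2 * j + 1) % 2 = 1 := by omega
  have h3 : (2 * j + 1) / 2 = j := by omega
  simp [h2, h3]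

lemma tm_pm (n : ℕ) : thueMorse n = 1 ∨ thueMorse n = -1 := by
  induction n using Nat.strong_induction_on with
  | _ n ih =>
    cases n with
    | zero => right; rw [thueMorse]
    | succ k =>
      rw [thueMorse]
      have hlt : (k + 1) / 2 < k + 1 := Nat.div_lt_self (Nat.succ_pos k) one_lt_two
      rcases ih _ hlt with h | h <;> split <;> simp [h]

lemma tm_sum (m : ℕ) : ∑ i ∈ Finset.range (2 * m), thueMorse i = 0 := by
  induction m with
  | zero => simp
  | succ k ih =>
      have h : 2 * (k + 1) = (2 * k + 1) + 1 := by ring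
      rw [h, Finset.sum_range_succ, Finset.sum_range_succ, ih, tm_two_mul_add_one, tm_two_mul]
      ring

/-- For every even `n = 2m` with `m ≥ 1`, there exists `ε > 0` such that
for all `q ∈ (1-ε, 1)` one has `t_n · (∑_{i=0}^n t_i q^i) > 0`. -/
theorem thueMorse_even_partial_sum_pos (m : ℕ) (hm : 1 ≤ m) :
    ∃ ε > (0 : ℝ), ∀ q ∈ Set.Ioo (1 - ε) (1 : ℝ),
      0 < (thueMorse (2 * m) : ℝ)
        * ∑ i ∈ Finset.range (2 * m + 1), (thueMorse i : ℝ) * q ^ i := by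
  set g : ℝ → ℝ := fun q =>
    (thueMorse (2 * m) : ℝ) * ∑ i ∈ Finset.range (2 * m + 1), (thueMorse i : ℝ) * q ^ i with hg
  have hcont : Continuous g := by
    apply Continuous.mul continuous_const
    exact continuous_finset_sum _ fun i _ => Continuous.mul continuous_const (continuous_pow i)
  have hg1 : g 1 = 1 := by
    have hsum : ∑ i ∈ Finset.range (2 * m + 1), thueMorse i = thueMorse (2 * m) := by
      rw [Finset.sum_range_succ, tm_sum]; ring
    have : g 1 = (thueMorse (2 * m) : ℝ) *
        ((∑ i ∈ Finset.range (2 * m + 1), thueMorse i : ℤ) : ℝ) := by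
      simp only [hg, one_pow, mul_one]
      push_cast
      ring
    rw [this, hsum]
    rcases tm_pm (2 * m) with h | h <;> rw [h] <;> norm_num
  have hc1 : ContinuousAt g 1 := hcont.continuousAt
  rw [Metric.continuousAt_iff] at hc1
  obtain ⟨δ, hδ, hball⟩ := hc1 (1/2) (by norm_num)
  refine ⟨δ, hδ, fun q hq => ?_⟩
  have hd : dist q 1 < δ := by
    rw [Real.dist_eq, abs_lt]
    constructor <;> [linarith [hq.1]; linarith [hq.2]]
  have := hball hd
  rw [Real.dist_eq, hg1, abs_lt] at this
  have h2 : (1 : ℝ)/2 < g q := by linarith [this.1]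
  show (0:ℝ) < g q
  linarith
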